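/- Let G be a finite group and ψ a class-function 2-cocycle on G with values in ℂˣ. Let C̃₁, …, C̃ₜ be the conjugacy classes of G consisting of ψ-regular elements, and for each i let k_i = Σ_{g ∈ C̃_i} g, the corresponding class sum in the twisted group algebra ℂ_ψG. Then {k₁, …, kₜ} is a basis of the center of ℂ_ψG. -/

import Mathlib

/-- A 2-cocycle on `G` with values in `ℂˣ` (trivial action). -/
def IsTwoCocycle {G : Type*} [Group G] (ψ : G → G → ℂˣ) : Prop :=
  ∀ g h k : G, ψ g h * ψ (g * h) k = ψ h k * ψ g (h * k)

/-- An element `g` is `ψ`-regular if `ψ(g,h) = ψ(h,g)` for every `h` in the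
centralizer of `g`. -/
def IsPsiRegular {G : Type*} [Group G] (ψ : G → G → ℂˣ) (g : G) : Prop :=
  ∀ h ∈ Subgroup.centralizer {g}, ψ g h = ψ h g

/-- A finite-dimensional module over the twisted group algebra `ℂ_ψ G`,
packaged as a projective representation: a finite-dimensional complex vector
space `V` together with operators `ρ g` satisfying
`ρ g * ρ h = ψ(g,h) • ρ(g h)` and (unitality of the module) `ρ 1 = ψ(1,1) • 1`. -/
structure TwistedGroupAlgebraModule (G : Type*) [Group G] (ψ : G → G → ℂˣ) where
  V : Type
  [isAddCommGroup : AddCommGroup V]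
  [isModule : Module ℂ V]
  [isFinDim : FiniteDimensional ℂ V]
  ρ : G → Module.End ℂ V
  mul_eq : ∀ g h : G, ρ g * ρ h = (ψ g h : ℂ) • ρ (g * h)
  one_eq : ρ 1 = (ψ 1 1 : ℂ) • 1

attribute [instance] TwistedGroupAlgebraModule.isAddCommGroup
  TwistedGroupAlgebraModule.isModule TwistedGroupAlgebraModule.isFinDim

/-- The character of a module over `ℂ_ψ G`: `χ_τ(g) = tr (g|_τ)`. -/
noncomputable def TwistedGroupAlgebraModule.char {G : Type*} [Group G]
    {ψ : G → G → ℂˣ} (τ : TwistedGroupAlgebraModule G ψ) (g : G) : ℂ :=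
  LinearMap.trace ℂ τ.V (τ.ρ g)

/-- `ψ` is a class-function cocycle if the character of every finite-dimensional
`ℂ_ψ G`-module is constant on conjugacy classes. -/
def IsClassFunctionCocycle {G : Type*} [Group G] (ψ : G → G → ℂˣ) : Prop :=
  ∀ τ : TwistedGroupAlgebraModule G ψ, ∀ g x : G, τ.char (x * g * x⁻¹) = τ.char g

namespace CSB

lemma aux9 (p1 p2 p3 p4 p5 p6 p7 p8 p9 : ℂ) (h1 : p1≠0) (h7 : p7≠0) (h8 : p8≠0) (h9 : p9≠0)
    (r1 : p1*p2 = p3*p4) (r2 : p5*p6 = p9*p4) (r3 : p7*p6 = p1*p8) :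
    p2 * p8⁻¹ = p5*p7⁻¹*(p3*p9⁻¹) := by
  have key : p2*(p7*p9) = p3*(p5*p8) := mul_left_cancel₀ h1 (by
    linear_combination (p7*p9)*r1 - p3*p7*r2 + p3*p5*r3)
  field_simp
  linear_combination key

variable {G : Type*} [Group G] {ψ : G → G → ℂˣ}

lemma psi_one_left (hψ : IsTwoCocycle ψ) (g : G) : ψ 1 g = ψ 1 1 := by
  have h := hψ 1 1 g
  simp only [one_mul] at h
  exact (mul_right_cancel h).symm

lemma psi_one_right (hψ : IsTwoCocycle ψ) (g : G) : ψ g 1 = ψ 1 1 := by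
  have h := hψ g 1 1
  simp only [mul_one, one_mul] at h
  exact mul_left_cancel (h.trans (mul_comm _ _))

lemma psi_inv (hψ : IsTwoCocycle ψ) (g : G) : ψ g g⁻¹ = ψ g⁻¹ g := by
  have h := hψ g g⁻¹ g
  rw [mul_inv_cancel, inv_mul_cancel, psi_one_left hψ g, psi_one_right hψ g] at h
  exact mul_right_cancel h

/-- The conjugation factor: `b x * b u = dlt x u • (b (x u x⁻¹) * b x)`. -/
noncomputable def dlt (ψ : G → G → ℂˣ) (x u : G) : ℂˣ := ψ x u * (ψ (x*u*x⁻¹) x)⁻¹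

lemma dlt_coe (x u : G) : (dlt ψ x u : ℂ) = (ψ x u : ℂ) * ((ψ (x*u*x⁻¹) x : ℂ))⁻¹ := by
  rw [dlt]; push_cast; ring

lemma dlt_mul (hψ : IsTwoCocycle ψ) (a c g : G) :
    dlt ψ (a*c) g = dlt ψ a (c*g*c⁻¹) * dlt ψ c g := by
  have e1 : a*(c*g*c⁻¹)*a⁻¹ = (a*c)*g*(a*c)⁻¹ := by group
  have r1 := hψ a c g
  have r2 := hψ a (c*g*c⁻¹) c
  have r3 := hψ ((a*c)*g*(a*c)⁻¹) a c
  have e2 : (c*g*c⁻¹)*c = c*g := by group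
  have e3 : ((a*c)*g*(a*c)⁻¹)*a = a*(c*g*c⁻¹) := by group
  rw [e2] at r2
  rw [e3] at r3
  have c1 : (ψ a c : ℂ) * (ψ (a*c) g : ℂ) = (ψ c g : ℂ) * (ψ a (c*g) : ℂ) := by
    exact_mod_cast congrArg Units.val r1
  have c2 : (ψ a (c*g*c⁻¹) : ℂ) * (ψ (a*(c*g*c⁻¹)) c : ℂ)
      = (ψ (c*g*c⁻¹) c : ℂ) * (ψ a (c*g) : ℂ) := by
    exact_mod_cast congrArg Units.val r2
  have c3 : (ψ ((a*c)*g*(a*c)⁻¹) a : ℂ) * (ψ (a*(c*g*c⁻¹)) c : ℂ)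
      = (ψ a c : ℂ) * (ψ ((a*c)*g*(a*c)⁻¹) (a*c) : ℂ) := by
    exact_mod_cast congrArg Units.val r3
  apply Units.ext
  rw [Units.val_mul, dlt_coe, dlt_coe, dlt_coe, e1]
  exact aux9 _ _ _ _ _ _ _ _ _ (Units.ne_zero (ψ a c)) (Units.ne_zero _) (Units.ne_zero _)
    (Units.ne_zero _) c1 c2 c3

lemma dlt_of_mem_centralizer (hreg : ∀ h ∈ Subgroup.centralizer {g}, ψ g h = ψ h g)
    {x : G} (hx : x ∈ Subgroup.centralizer {g}) : dlt ψ x g = 1 := by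
  have hc : g * x = x * g := Subgroup.mem_centralizer_iff.mp hx g rfl
  have hconj : x*g*x⁻¹ = g := by rw [← hc]; group
  rw [dlt, hconj, hreg x hx, mul_inv_cancel]

lemma dlt_one_left (hψ : IsTwoCocycle ψ) (g : G) : dlt ψ 1 g = 1 := by
  rw [dlt, show (1:G)*g*(1:G)⁻¹ = g by group, psi_one_left hψ g, psi_one_right hψ g,
    mul_inv_cancel]

/-- well-definedness of the conjugation factor along the class of a regular element -/
lemma dlt_well_defined (hψ : IsTwoCocycle ψ) {g : G}
    (hreg : IsPsiRegular ψ g) {x y : G} (h : x*g*x⁻¹ = y*g*y⁻¹) :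
    dlt ψ x g = dlt ψ y g := by
  have hx : x = y * (y⁻¹*x) := by group
  have hc : (y⁻¹*x) ∈ Subgroup.centralizer {g} := by
    rw [Subgroup.mem_centralizer_iff]
    rintro h' rfl
    have : y⁻¹ * (x*h'*x⁻¹) * y = h' := by rw [h]; group
    calc h' * (y⁻¹*x) = y⁻¹ * (x*h'*x⁻¹) * y * (y⁻¹*x) := by rw [this]
    _ = y⁻¹*x*h' := by group
  have hcg : (y⁻¹*x)*g*(y⁻¹*x)⁻¹ = g := by
    have hc' : g * (y⁻¹*x) = (y⁻¹*x) * g := Subgroup.mem_centralizer_iff.mp hc g rfl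
    rw [← hc']; group
  rw [hx, dlt_mul hψ, hcg, dlt_of_mem_centralizer hreg hc, mul_one]

/-- regularity is invariant under conjugation -/
lemma isPsiRegular_conj (hψ : IsTwoCocycle ψ) {g : G} (hreg : IsPsiRegular ψ g) (h : G) :
    IsPsiRegular ψ (h*g*h⁻¹) := by
  intro x hx
  have hc : (h*g*h⁻¹) * x = x * (h*g*h⁻¹) := Subgroup.mem_centralizer_iff.mp hx _ rfl
  have hd : dlt ψ x (h*g*h⁻¹) = 1 := by
    have hmem : (h⁻¹*x*h) ∈ Subgroup.centralizer {g} := by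
      rw [Subgroup.mem_centralizer_iff]
      rintro g' rfl
      have := hc
      have e : g' * (h⁻¹*x*h) = h⁻¹ * ((h*g'*h⁻¹) * x) * h := by group
      rw [e, hc]; group
    have e1 : x * h = h * (h⁻¹*x*h) := by group
    have e2 : (h⁻¹*x*h)*g*(h⁻¹*x*h)⁻¹ = g := by
      have hc' : g * (h⁻¹*x*h) = (h⁻¹*x*h) * g := Subgroup.mem_centralizer_iff.mp hmem g rfl
      rw [← hc']; group
    have d1 : dlt ψ (x*h) g = dlt ψ x (h*g*h⁻¹) * dlt ψ h g := dlt_mul hψ x h g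
    have d2 : dlt ψ (h*(h⁻¹*x*h)) g
        = dlt ψ h ((h⁻¹*x*h)*g*(h⁻¹*x*h)⁻¹) * dlt ψ (h⁻¹*x*h) g := dlt_mul hψ _ _ g
    rw [e2, dlt_of_mem_centralizer hreg hmem, mul_one] at d2
    rw [e1, d2] at d1
    have hcanc : dlt ψ x (h*g*h⁻¹) * dlt ψ h g = 1 * dlt ψ h g := by rw [one_mul, ← d1]
    exact mul_right_cancel hcanc
  -- from dlt = 1 and x centralizes h*g*h⁻¹, conclude ψ symmetric
  have hconj : x*(h*g*h⁻¹)*x⁻¹ = h*g*h⁻¹ := by rw [← hc]; group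
  rw [dlt, hconj] at hd
  have := mul_eq_one_iff_eq_inv.mp hd
  rw [inv_inv] at this  -- ψ x (hgh⁻¹) = ψ (hgh⁻¹) x
  exact this.symm

end CSB

namespace CSB2
open CSB
variable {G : Type*} [Group G] {ψ : G → G → ℂˣ}

lemma isPsiRegular_inv (hψ : IsTwoCocycle ψ) {g : G} (hreg : IsPsiRegular ψ g) :
    IsPsiRegular ψ g⁻¹ := by
  intro x hx
  have hcomm : g⁻¹ * x = x * g⁻¹ := Subgroup.mem_centralizer_iff.mp hx g⁻¹ rfl
  have hcomm' : g * x = x * g := by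
    have h2 : g * (g⁻¹ * x) * g = g * (x * g⁻¹) * g := by rw [hcomm]
    rw [show g*(g⁻¹*x)*g = x*g by group, show g*(x*g⁻¹)*g = g*x by group] at h2
    exact h2.symm
  have hxc : x ∈ Subgroup.centralizer ({g} : Set G) := by
    rw [Subgroup.mem_centralizer_iff]; rintro y rfl; exact hcomm'
  have r1 := hψ x g⁻¹ g
  have r2 := hψ g⁻¹ x g
  have r3 := hψ g⁻¹ g x
  rw [inv_mul_cancel, psi_one_right hψ] at r1
  rw [inv_mul_cancel, psi_one_left hψ] at r3
  rw [← hreg x hxc, ← hcomm', ← r3] at r2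
  rw [show x * g⁻¹ = g⁻¹ * x from hcomm.symm] at r1
  -- r1 : ψ x g⁻¹ * ψ (g⁻¹*x) g = ψ g⁻¹ g * ψ 1 1
  -- r2 : ψ g⁻¹ x * ψ (g⁻¹*x) g = ψ g⁻¹ g * ψ 1 1
  exact mul_right_cancel (r2.trans r1.symm)

end CSB2

namespace CSB3
open CSB CSB2

variable {G : Type*} [Group G] [Fintype G] [DecidableEq G] {ψ : G → G → ℂˣ}
variable {A : Type*} [Ring A] [Algebra ℂ A] (b : Module.Basis G ℂ A)

set_option linter.unusedSectionVars false

lemma repr_sum (c : G → ℂ) (w : G) : b.repr (∑ u, c u • b u) w = c w := by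
  have : b.repr (∑ u, c u • b u) = ∑ u, c u • Finsupp.single u 1 := by
    rw [map_sum]; simp
  rw [this, Finset.sum_apply']
  simp [Finsupp.single_apply]

lemma mul_expand_left (hb : ∀ g h : G, b g * b h = (ψ g h : ℂ) • b (g * h)) (h : G) (x : A) :
    b h * x = ∑ w, (b.repr x (h⁻¹*w) * (ψ h (h⁻¹*w) : ℂ)) • b w := by
  conv_lhs => rw [← b.sum_repr x, Finset.mul_sum]
  rw [← Equiv.sum_comp (Equiv.mulLeft h) (fun w => (b.repr x (h⁻¹*w) * (ψ h (h⁻¹*w) : ℂ)) • b w)]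
  refine Finset.sum_congr rfl fun u _ => ?_
  simp only [Equiv.coe_mulLeft, inv_mul_cancel_left]
  rw [mul_smul_comm, hb, smul_smul, mul_comm]

lemma mul_expand_right (hb : ∀ g h : G, b g * b h = (ψ g h : ℂ) • b (g * h)) (h : G) (x : A) :
    x * b h = ∑ w, (b.repr x (w*h⁻¹) * (ψ (w*h⁻¹) h : ℂ)) • b w := by
  conv_lhs => rw [← b.sum_repr x, Finset.sum_mul]
  rw [← Equiv.sum_comp (Equiv.mulRight h)
    (fun w => (b.repr x (w*h⁻¹) * (ψ (w*h⁻¹) h : ℂ)) • b w)]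
  refine Finset.sum_congr rfl fun u _ => ?_
  simp only [Equiv.coe_mulRight, mul_inv_cancel_right]
  rw [smul_mul_assoc, hb, smul_smul, mul_comm]

lemma repr_mul_left (hb : ∀ g h : G, b g * b h = (ψ g h : ℂ) • b (g * h)) (h : G) (x : A) (w : G) :
    b.repr (b h * x) w = b.repr x (h⁻¹*w) * (ψ h (h⁻¹*w) : ℂ) := by
  rw [mul_expand_left b hb, repr_sum]

lemma repr_mul_right (hb : ∀ g h : G, b g * b h = (ψ g h : ℂ) • b (g * h)) (h : G) (x : A) (w : G) :
    b.repr (x * b h) w = b.repr x (w*h⁻¹) * (ψ (w*h⁻¹) h : ℂ) := by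
  rw [mul_expand_right b hb, repr_sum]

/-- the coefficient rule for central elements -/
lemma central_repr (hb : ∀ g h : G, b g * b h = (ψ g h : ℂ) • b (g * h)) (hψ : IsTwoCocycle ψ) {z : A} (hz : z ∈ Subalgebra.center ℂ A) (h u : G) :
    b.repr z (h*u*h⁻¹) = (dlt ψ h u : ℂ) * b.repr z u := by
  have hc : b h * z = z * b h := Subalgebra.mem_center_iff.mp hz (b h)
  have e1 := congrArg (fun t => b.repr t (h*u)) hc
  simp only [repr_mul_left b hb, repr_mul_right b hb] at e1
  rw [show h⁻¹*(h*u) = u by group] at e1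
  have hq : (ψ (h*u*h⁻¹) h : ℂ) ≠ 0 := Units.ne_zero _
  rw [dlt_coe, show (ψ h u:ℂ) * ((ψ (h*u*h⁻¹) h : ℂ))⁻¹ * b.repr z u
      = ((ψ h u:ℂ) * b.repr z u)/(ψ (h*u*h⁻¹) h : ℂ) by ring, eq_div_iff hq]
  linear_combination -e1

/-- converse: the coefficient rule implies centrality -/
lemma central_of_repr (hb : ∀ g h : G, b g * b h = (ψ g h : ℂ) • b (g * h)) (hψ : IsTwoCocycle ψ) {z : A}
    (hz : ∀ h u : G, b.repr z (h*u*h⁻¹) = (dlt ψ h u : ℂ) * b.repr z u) :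
    z ∈ Subalgebra.center ℂ A := by
  rw [Subalgebra.mem_center_iff]
  have key : ∀ h : G, b h * z = z * b h := by
    intro h
    rw [mul_expand_left b hb, mul_expand_right b hb]
    refine Finset.sum_congr rfl fun w _ => ?_
    congr 1
    have e := hz h (h⁻¹*w)
    rw [show h*(h⁻¹*w)*h⁻¹ = w*h⁻¹ by group] at e
    rw [e, dlt_coe, show h*(h⁻¹*w)*h⁻¹ = w*h⁻¹ by group]
    field_simp
  intro y
  conv_lhs => rw [← b.sum_repr y, Finset.sum_mul]
  conv_rhs => rw [← b.sum_repr y, Finset.mul_sum]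
  refine Finset.sum_congr rfl fun h _ => ?_
  rw [smul_mul_assoc, mul_smul_comm, key h]

end CSB3

namespace CSB4
open CSB CSB2 CSB3

variable {G : Type*} [Group G] [Fintype G] [DecidableEq G] {ψ : G → G → ℂˣ}
variable {A : Type*} [Ring A] [Algebra ℂ A]

set_option linter.unusedSectionVars false

lemma b_one (b : Module.Basis G ℂ A) (hb : ∀ g h : G, b g * b h = (ψ g h : ℂ) • b (g * h))
    (hψ : IsTwoCocycle ψ) : b 1 = (ψ 1 1 : ℂ) • 1 := by
  have h1 : ∀ u : G, b 1 * b u = (ψ 1 1 : ℂ) • b u := by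
    intro u
    rw [hb, psi_one_left hψ, one_mul]
  have : b 1 * 1 = (ψ 1 1 : ℂ) • 1 := by
    conv_lhs => rw [← b.sum_repr 1, Finset.mul_sum]
    conv_rhs => rw [← b.sum_repr 1, Finset.smul_sum]
    refine Finset.sum_congr rfl fun u _ => ?_
    rw [mul_smul_comm, h1, smul_comm]
  rwa [mul_one] at this

set_option maxHeartbeats 1000000 in
set_option synthInstance.maxHeartbeats 400000 in
open LinearMap in
/-- The key lemma: for a `ψ`-regular `g` and a class-function cocycle, the conjugation
factor is trivial. -/
lemma key_dlt (b : Module.Basis G ℂ A) (hb : ∀ g h : G, b g * b h = (ψ g h : ℂ) • b (g * h))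
    (hψ : IsTwoCocycle ψ) (hcf : IsClassFunctionCocycle ψ)
    {g : G} (hreg : IsPsiRegular ψ g) (x : G) : dlt ψ x g = 1 := by
  classical
  have hreg' : IsPsiRegular ψ g⁻¹ := isPsiRegular_inv hψ hreg
  -- the twisted class-sum over the class of g⁻¹
  set F : G → ℂ := fun u => if h : ∃ y : G, y*g⁻¹*y⁻¹ = u then (dlt ψ h.choose g⁻¹ : ℂ) else 0
    with hF
  have hFconj : ∀ (y : G), F (y*g⁻¹*y⁻¹) = (dlt ψ y g⁻¹ : ℂ) := by
    intro y
    have hex : ∃ y' : G, y'*g⁻¹*y'⁻¹ = y*g⁻¹*y⁻¹ := ⟨y, rfl⟩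
    rw [hF]
    simp only [dif_pos hex]
    exact congrArg Units.val (dlt_well_defined hψ hreg' hex.choose_spec)
  have hFg : F g⁻¹ = 1 := by
    have : F (1*g⁻¹*1⁻¹) = (dlt ψ 1 g⁻¹ : ℂ) := hFconj 1
    rw [show (1:G)*g⁻¹*(1:G)⁻¹ = g⁻¹ by group, dlt_one_left hψ] at this
    simpa using this
  have hFrule : ∀ h u : G, F (h*u*h⁻¹) = (dlt ψ h u : ℂ) * F u := by
    intro h u
    by_cases hex : ∃ y : G, y*g⁻¹*y⁻¹ = u
    · obtain ⟨y, rfl⟩ := hex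
      have e : h*(y*g⁻¹*y⁻¹)*h⁻¹ = (h*y)*g⁻¹*(h*y)⁻¹ := by group
      rw [e, hFconj, hFconj, ← Units.val_mul, ← dlt_mul hψ]
    · have hex2 : ¬ ∃ y : G, y*g⁻¹*y⁻¹ = h*u*h⁻¹ := by
        rintro ⟨y, hy⟩
        exact hex ⟨h⁻¹*y, by rw [show h⁻¹*y*g⁻¹*(h⁻¹*y)⁻¹ = h⁻¹*(y*g⁻¹*y⁻¹)*h by group, hy]; group⟩
      rw [hF]
      simp only [dif_neg hex, dif_neg hex2, mul_zero]
  set z : A := ∑ u, F u • b u with hz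
  have hrepr : ∀ u, b.repr z u = F u := fun u => repr_sum b F u
  have hzc : z ∈ Subalgebra.center ℂ A := by
    refine central_of_repr b hb hψ fun h u => ?_
    rw [hrepr, hrepr, hFrule]
  -- the trace of x ↦ b g * x * z is nonzero
  have hfree : Module.Free ℂ A := Module.Free.of_basis b
  have hfin : Module.Finite ℂ A := Module.Finite.of_basis b
  set φ : Module.End ℂ A := mulLeft ℂ (b g) ∘ₗ mulRight ℂ z with hφ
  have hw1 : b.repr (b g * z) 1 = (ψ g g⁻¹ : ℂ) := by
    rw [repr_mul_left b hb, show g⁻¹*(1:G) = g⁻¹ by group, hrepr, hFg, one_mul]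
  have htrφ : LinearMap.trace ℂ A φ = (Fintype.card G : ℂ) * ((ψ g g⁻¹ : ℂ) * (ψ 1 1 : ℂ)) := by
    rw [trace_eq_matrix_trace ℂ b φ, Matrix.trace]
    have hdiag : ∀ u : G, Matrix.diag (toMatrix b b φ) u = (ψ g g⁻¹ : ℂ) * (ψ 1 1 : ℂ) := by
      intro u
      have : φ (b u) = (b g * z) * b u := by
        simp only [hφ, coe_comp, Function.comp_apply, mulLeft_apply, mulRight_apply]
        rw [Subalgebra.mem_center_iff.mp hzc (b u), mul_assoc]
      rw [Matrix.diag_apply, toMatrix_apply, this, repr_mul_right b hb,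
        mul_inv_cancel, hw1, psi_one_left hψ]
    rw [Finset.sum_congr rfl fun u _ => hdiag u, Finset.sum_const, Finset.card_univ,
      nsmul_eq_mul]
  have htrφ_ne : LinearMap.trace ℂ A φ ≠ 0 := by
    rw [htrφ]
    refine mul_ne_zero ?_ (mul_ne_zero (Units.ne_zero _) (Units.ne_zero _))
    exact_mod_cast Nat.cast_ne_zero.mpr Fintype.card_ne_zero
  -- extract a generalized eigenspace with nonzero restricted trace
  have hcomm : Commute (mulRight ℂ z) (mulLeft ℂ (b g)) := (commute_mulLeft_right (R := ℂ) (b g) z).symm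
  have hsup : ⨆ μ, Module.End.maxGenEigenspace (mulRight ℂ z) μ = ⊤ :=
    Module.End.iSup_maxGenEigenspace_eq_top _
  have hex : ∃ μ : ℂ, LinearMap.trace ℂ _
      ((mulLeft ℂ (b g)).restrict
        (Module.End.mapsTo_maxGenEigenspace_of_comm (f := mulRight ℂ z) hcomm μ)) ≠ 0 := by
    by_contra hall
    push_neg at hall
    exact htrφ_ne (trace_comp_eq_zero_of_commute_of_trace_restrict_eq_zero hcomm hsup hall)
  obtain ⟨μ, hμ⟩ := hex
  -- build the twisted module on the generalized eigenspace
  set W : Submodule ℂ A := Module.End.maxGenEigenspace (mulRight ℂ z) μ with hWdef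
  have maps : ∀ u : G, Set.MapsTo (mulLeft ℂ (b u)) W W := fun u =>
    Module.End.mapsTo_maxGenEigenspace_of_comm (f := mulRight ℂ z)
      ((commute_mulLeft_right (R := ℂ) (b u) z).symm) μ
  set ρ' : G → Module.End ℂ W := fun u => (mulLeft ℂ (b u)).restrict (maps u) with hρ'def
  have hρ'mul : ∀ u v : G, ρ' u * ρ' v = (ψ u v : ℂ) • ρ' (u*v) := by
    intro u v
    refine LinearMap.ext fun w => Subtype.ext ?_
    change b u * (b v * (w : A)) = (ψ u v : ℂ) • (b (u*v) * (w : A))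
    rw [← mul_assoc, hb, smul_mul_assoc]
  have hρ'one : ρ' 1 = (ψ 1 1 : ℂ) • 1 := by
    refine LinearMap.ext fun w => Subtype.ext ?_
    change b 1 * (w : A) = (ψ 1 1 : ℂ) • (w : A)
    rw [b_one b hb hψ, smul_mul_assoc, one_mul]
  set n := Module.finrank ℂ W with hn
  set e : W ≃ₗ[ℂ] (Fin n → ℂ) := (Module.finBasis ℂ W).equivFun with he
  set τ : TwistedGroupAlgebraModule G ψ :=
    { V := Fin n → ℂ
      ρ := fun u => e.conj (ρ' u)
      mul_eq := by
        intro u v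
        show e.conj (ρ' u) * e.conj (ρ' v) = (ψ u v : ℂ) • e.conj (ρ' (u*v))
        rw [Module.End.mul_eq_comp, ← LinearEquiv.conj_comp, ← Module.End.mul_eq_comp, hρ'mul, map_smul]
      one_eq := by
        show e.conj (ρ' 1) = (ψ 1 1 : ℂ) • 1
        rw [hρ'one, map_smul, Module.End.one_eq_id, LinearEquiv.conj_id, ← Module.End.one_eq_id] } with hτ
  have hχ : ∀ u : G, τ.char u = LinearMap.trace ℂ W (ρ' u) := fun u =>
    LinearMap.trace_conj' (ρ' u) e
  have hχg : τ.char g ≠ 0 := by rw [hχ]; exact hμ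
  -- character identity forces the conjugation factor to be 1
  have c1 : τ.ρ x * τ.ρ x⁻¹ = ((ψ x x⁻¹ : ℂ) * (ψ 1 1 : ℂ)) • 1 := by
    rw [τ.mul_eq, mul_inv_cancel, τ.one_eq, smul_smul]
  have key1 : LinearMap.trace ℂ _ (τ.ρ (x*g*x⁻¹) * (τ.ρ x * τ.ρ x⁻¹))
      = ((ψ x x⁻¹ : ℂ) * (ψ 1 1 : ℂ)) * τ.char (x*g*x⁻¹) := by
    rw [c1, mul_smul_comm, mul_one, map_smul, smul_eq_mul, TwistedGroupAlgebraModule.char]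
  have key2 : LinearMap.trace ℂ _ (τ.ρ (x*g*x⁻¹) * (τ.ρ x * τ.ρ x⁻¹))
      = ((ψ (x*g*x⁻¹) x : ℂ) * (ψ x⁻¹ (x*g) : ℂ)) * τ.char g := by
    rw [← mul_assoc, τ.mul_eq, show (x*g*x⁻¹)*x = x*g by group, smul_mul_assoc, map_smul,
      LinearMap.trace_mul_comm, τ.mul_eq, show x⁻¹*(x*g) = g by group, map_smul,
      smul_eq_mul, smul_eq_mul, ← mul_assoc, TwistedGroupAlgebraModule.char]
  have hclass := hcf τ g x
  rw [key2, hclass] at key1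
  have hceq : (ψ x x⁻¹ : ℂ) * (ψ 1 1 : ℂ) = (ψ (x*g*x⁻¹) x : ℂ) * (ψ x⁻¹ (x*g) : ℂ) :=
    mul_right_cancel₀ hχg key1.symm
  -- cocycle identity at (x⁻¹, x, g)
  have r := hψ x⁻¹ x g
  rw [inv_mul_cancel, psi_one_left hψ g, ← psi_inv hψ x] at r
  have rC : (ψ x x⁻¹ : ℂ) * (ψ 1 1 : ℂ) = (ψ x g : ℂ) * (ψ x⁻¹ (x*g) : ℂ) := by
    exact_mod_cast congrArg Units.val r
  have hfin2 : (ψ (x*g*x⁻¹) x : ℂ) = (ψ x g : ℂ) :=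
    mul_right_cancel₀ (Units.ne_zero (ψ x⁻¹ (x*g))) (hceq.symm.trans rC)
  have hfin3 : ψ (x*g*x⁻¹) x = ψ x g := Units.ext hfin2
  rw [dlt, hfin3, mul_inv_cancel]

open scoped Classical in
lemma repr_classSum (b : Module.Basis G ℂ A) (C : ConjClasses G) (u : G) :
    b.repr (∑ g ∈ (Set.toFinite C.carrier).toFinset, b g) u
      = if u ∈ C.carrier then 1 else 0 := by
  classical
  have : (∑ g ∈ (Set.toFinite C.carrier).toFinset, b g)
      = ∑ g, (if g ∈ C.carrier then (1:ℂ) else 0) • b g := by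
    simp only [ite_smul, one_smul, zero_smul,
      ← Set.Finite.mem_toFinset (Set.toFinite C.carrier)]
    rw [Finset.sum_ite_mem, Finset.univ_inter]
  rw [this, repr_sum]

lemma mem_carrier_conj {C : ConjClasses G} {u : G} (hu : u ∈ C.carrier) (h : G) :
    h*u*h⁻¹ ∈ C.carrier := by
  rw [ConjClasses.mem_carrier_iff_mk_eq] at hu ⊢
  rw [← hu, eq_comm, ConjClasses.mk_eq_mk_iff_isConj]
  exact (isConj_iff).mpr ⟨h, rfl⟩

open scoped Classical in
lemma class_sum_central (b : Module.Basis G ℂ A) (hb : ∀ g h : G, b g * b h = (ψ g h : ℂ) • b (g * h))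
    (hψ : IsTwoCocycle ψ) (hcf : IsClassFunctionCocycle ψ)
    (C : ConjClasses G) (hC : ∀ g ∈ C.carrier, IsPsiRegular ψ g) :
    (∑ g ∈ (Set.toFinite C.carrier).toFinset, b g) ∈ Subalgebra.center ℂ A := by
  classical
  refine central_of_repr b hb hψ fun h u => ?_
  rw [repr_classSum, repr_classSum]
  by_cases hu : u ∈ C.carrier
  · rw [if_pos hu, if_pos (mem_carrier_conj hu h), key_dlt b hb hψ hcf (hC u hu) h]
    simp
  · have : ¬ (h*u*h⁻¹ ∈ C.carrier) := by
      intro hcon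
      have := mem_carrier_conj hcon h⁻¹
      rw [show h⁻¹*(h*u*h⁻¹)*h⁻¹⁻¹ = u by group] at this
      exact hu this
    rw [if_neg hu, if_neg this, mul_zero]

end CSB4

/-- Let `G` be a finite group, `ψ` a class-function 2-cocycle on `G`, and let
`A` be the twisted group algebra `ℂ_ψ G`, presented as a `ℂ`-algebra with a
basis `b` indexed by `G` satisfying `b g * b h = ψ(g,h) • b (g h)`.  Then the
class sums `k_C = ∑_{g ∈ C} b g`, where `C` ranges over the `ψ`-regular
conjugacy classes of `G`, form a basis of the center of `A`. -/
theorem classSums_basis_of_center {G : Type*} [Group G] [Finite G]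
    (ψ : G → G → ℂˣ) (hψ : IsTwoCocycle ψ) (hcf : IsClassFunctionCocycle ψ)
    (A : Type*) [Ring A] [Algebra ℂ A] (b : Module.Basis G ℂ A)
    (hb : ∀ g h : G, b g * b h = (ψ g h : ℂ) • b (g * h)) :
    LinearIndependent ℂ
      (fun C : {C : ConjClasses G // ∀ g ∈ C.carrier, IsPsiRegular ψ g} =>
        ∑ g ∈ (Set.toFinite (C : ConjClasses G).carrier).toFinset, b g) ∧
    Submodule.span ℂ
      (Set.range
        (fun C : {C : ConjClasses G // ∀ g ∈ C.carrier, IsPsiRegular ψ g} =>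
          ∑ g ∈ (Set.toFinite (C : ConjClasses G).carrier).toFinset, b g)) =
      Subalgebra.toSubmodule (Subalgebra.center ℂ A) := by
  classical
  cases nonempty_fintype G
  constructor
  · -- linear independence
    rw [linearIndependent_iff']
    intro t c hsum i hit
    obtain ⟨a, ha⟩ := ConjClasses.exists_rep (i : ConjClasses G)
    have hmem : a ∈ (i : ConjClasses G).carrier := ConjClasses.mem_carrier_iff_mk_eq.mpr ha
    have h0 : ∑ j ∈ t, c j * b.repr (∑ g ∈ (Set.toFinite (j : ConjClasses G).carrier).toFinset,
        b g) a = 0 := by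
      have := congrArg (fun y => b.repr y a) hsum
      simpa [map_sum, Finset.sum_apply'] using this
    rw [Finset.sum_eq_single_of_mem i hit (fun j _ hji => ?_)] at h0
    · rw [CSB4.repr_classSum, if_pos hmem, mul_one] at h0
      exact h0
    · rw [CSB4.repr_classSum]
      rw [if_neg, mul_zero]
      intro hcon
      exact hji (Subtype.ext (by rw [← ConjClasses.mem_carrier_iff_mk_eq.mp hcon, ha]))
  · -- span equals center
    apply le_antisymm
    · rw [Submodule.span_le]
      rintro y ⟨C, rfl⟩
      exact (Subalgebra.mem_toSubmodule _).mpr (CSB4.class_sum_central b hb hψ hcf C C.2)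
    · intro z hz
      have hzc : z ∈ Subalgebra.center ℂ A := (Subalgebra.mem_toSubmodule _).mp hz
      have hdec : z = ∑ C : ConjClasses G,
          ∑ u ∈ Finset.univ.filter (fun u => ConjClasses.mk u = C), b.repr z u • b u := by
        rw [Finset.sum_fiberwise Finset.univ (fun u => ConjClasses.mk u)
          (fun u => b.repr z u • b u)]
        exact (b.sum_repr z).symm
      rw [hdec]
      refine Submodule.sum_mem _ fun C _ => ?_
      by_cases hR : ∀ g ∈ C.carrier, IsPsiRegular ψ g
      · obtain ⟨a, ha⟩ := ConjClasses.exists_rep C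
        have hamem : a ∈ C.carrier := ConjClasses.mem_carrier_iff_mk_eq.mpr ha
        have hkey : ∀ u ∈ Finset.univ.filter (fun u => ConjClasses.mk u = C),
            b.repr z u = b.repr z a := by
          intro u hu
          rw [Finset.mem_filter] at hu
          obtain ⟨h, hh⟩ := isConj_iff.mp
            (ConjClasses.mk_eq_mk_iff_isConj.mp (ha.trans hu.2.symm))
          rw [← hh, CSB3.central_repr b hb hψ hzc h a,
            CSB4.key_dlt b hb hψ hcf (hR a hamem) h]
          simp
        have hsets : Finset.univ.filter (fun u => ConjClasses.mk u = C)
            = (Set.toFinite C.carrier).toFinset := by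
          ext u
          rw [Finset.mem_filter, Set.Finite.mem_toFinset, ConjClasses.mem_carrier_iff_mk_eq]
          simp
        have hchunk : ∑ u ∈ Finset.univ.filter (fun u => ConjClasses.mk u = C),
            b.repr z u • b u
            = b.repr z a • ∑ g ∈ (Set.toFinite C.carrier).toFinset, b g := by
          rw [Finset.sum_congr rfl (fun u hu => by rw [hkey u hu]), ← Finset.smul_sum, hsets]
        rw [hchunk]
        exact Submodule.smul_mem _ _ (Submodule.subset_span ⟨⟨C, hR⟩, rfl⟩)
      · push_neg at hR
        obtain ⟨g₀, hg₀mem, hg₀⟩ := hR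
        have hall : ∀ u ∈ Finset.univ.filter (fun u => ConjClasses.mk u = C),
            b.repr z u • b u = (0 : A) := by
          intro u hu
          rw [Finset.mem_filter] at hu
          have hnotreg : ¬ IsPsiRegular ψ u := by
            intro hreg
            apply hg₀
            obtain ⟨h, hh⟩ := isConj_iff.mp (ConjClasses.mk_eq_mk_iff_isConj.mp
              (hu.2.trans (ConjClasses.mem_carrier_iff_mk_eq.mp hg₀mem).symm))
            rw [← hh]
            exact CSB.isPsiRegular_conj hψ hreg h
          rw [IsPsiRegular] at hnotreg
          push_neg at hnotreg
          obtain ⟨h, hmem, hne⟩ := hnotreg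
          have hc : u * h = h * u := Subgroup.mem_centralizer_iff.mp hmem u rfl
          have e := CSB3.central_repr b hb hψ hzc h u
          rw [show h*u*h⁻¹ = u by rw [show h*u = u*h from hc.symm]; group] at e
          have hz0 : b.repr z u = 0 := by
            by_contra hz0
            apply hne
            have hd : (CSB.dlt ψ h u : ℂ) = 1 := by
              have := mul_right_cancel₀ hz0 (e.symm.trans (one_mul _).symm)
              exact this
            have : CSB.dlt ψ h u = 1 := Units.ext (by simpa using hd)
            rw [CSB.dlt, show h*u*h⁻¹ = u by rw [show h*u = u*h from hc.symm]; group] at this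
            have := mul_inv_eq_one.mp this
            exact this.symm
          rw [hz0, zero_smul]
        rw [Finset.sum_congr rfl hall, Finset.sum_const_zero]
        exact Submodule.zero_mem _
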